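/- arXiv:1302.5549 — 2 statements merged into one kernel-verified Lean document; each statement's English description precedes it below -/
import Mathlib

section
/- Let G1 = (V1, E1) and G2 = (V2, E2) be well-formed graphs over the same node type, and let S be a finite set of operations such that: (i) no two distinct operations of S act on the same node or on the same edge (for each node v, S contains at most one of addNode(v), remNode(v), and not both; for each unordered pair {v,w}, S contains at most one of addEdge(v,w), remEdge(v,w), and not both); (ii) every addNode(v) ∈ S has v ∉ V1, every remNode(v) ∈ S has v ∈ V1, every addEdge(v,w) ∈ S has {v,w} ∉ E1, and every remEdge(v,w) ∈ S has {v,w} ∈ E1; (iii) applying S to G1 (in the order: all remEdge operations, then all remNode operations, then all addNode operations, then all addEdge operations) yields G2; and (iv) no proper subset of S applied to G1 in that order yields G2. Then S = Δ(G1, G2); that is, Δ(G1, G2) is the unique such minimal set of operations deriving G2 from G1. -/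
/-- A graph over a node type `α`: a set of nodes and a set of edges
(unordered pairs of nodes). -/
structure PlainGraph (α : Type*) where
  V : Set α
  E : Set (Sym2 α)

/-- A graph is well-formed if its edges are pairs of *distinct* nodes and
both endpoints of every edge belong to the node set. -/
def PlainGraph.WellFormed {α : Type*} (G : PlainGraph α) : Prop :=
  (∀ e ∈ G.E, ¬ e.IsDiag) ∧ ∀ e ∈ G.E, ∀ v ∈ e, v ∈ G.V

/-- Update operations on graphs. -/
inductive Op (α : Type*) where
  | addNode (v : α)
  | remNode (v : α)
  | addEdge (e : Sym2 α)
  | remEdge (e : Sym2 α)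

/-- The delta Δ(G1, G2). -/
def delta {α : Type*} (G1 G2 : PlainGraph α) : Set (Op α) :=
  (Op.addNode '' (G2.V \ G1.V)) ∪ (Op.remNode '' (G1.V \ G2.V)) ∪
  (Op.addEdge '' (G2.E \ G1.E)) ∪
  (Op.remEdge '' {e | e ∈ G1.E \ G2.E ∧ ∀ v ∈ e, v ∈ G2.V})

/-- The result of applying a set `S` of operations to a graph `G` in the order:
first all `remEdge` operations, then all `remNode` operations
(each of which removes the node and its incident edges),
then all `addNode` operations, then all `addEdge` operations. -/
def applyDelta {α : Type*} (S : Set (Op α)) (G : PlainGraph α) : PlainGraph α :=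
  ⟨(G.V \ {v | Op.remNode v ∈ S}) ∪ {v | Op.addNode v ∈ S},
   {e ∈ G.E | Op.remEdge e ∉ S ∧ ∀ v ∈ e, Op.remNode v ∉ S} ∪ {e | Op.addEdge e ∈ S}⟩

theorem mem_delta_iff {α : Type*} (G1 G2 : PlainGraph α) (op : Op α) :
    op ∈ delta G1 G2 ↔
      (∃ v, v ∈ G2.V ∧ v ∉ G1.V ∧ op = Op.addNode v) ∨
      (∃ v, v ∈ G1.V ∧ v ∉ G2.V ∧ op = Op.remNode v) ∨
      (∃ e, e ∈ G2.E ∧ e ∉ G1.E ∧ op = Op.addEdge e) ∨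
      (∃ e, (e ∈ G1.E ∧ e ∉ G2.E) ∧ (∀ v ∈ e, v ∈ G2.V) ∧ op = Op.remEdge e) := by
  simp only [delta, Set.mem_union, Set.mem_image, Set.mem_setOf_eq, Set.mem_diff]
  constructor
  · rintro (((⟨v,hv,rfl⟩|⟨v,hv,rfl⟩)|⟨e,he,rfl⟩)|⟨e,he,rfl⟩)
    · exact Or.inl ⟨v, hv.1, hv.2, rfl⟩
    · exact Or.inr (Or.inl ⟨v, hv.1, hv.2, rfl⟩)
    · exact Or.inr (Or.inr (Or.inl ⟨e, he.1, he.2, rfl⟩))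
    · exact Or.inr (Or.inr (Or.inr ⟨e, he.1, he.2, rfl⟩))
  · rintro (⟨v,h1,h2,rfl⟩|⟨v,h1,h2,rfl⟩|⟨e,h1,h2,rfl⟩|⟨e,h1,h2,rfl⟩)
    · exact Or.inl (Or.inl (Or.inl ⟨v, ⟨h1,h2⟩, rfl⟩))
    · exact Or.inl (Or.inl (Or.inr ⟨v, ⟨h1,h2⟩, rfl⟩))
    · exact Or.inl (Or.inr ⟨e, ⟨h1,h2⟩, rfl⟩)
    · exact Or.inr ⟨e, ⟨h1,h2⟩, rfl⟩

/-- Δ(G1, G2) is the *unique* minimal set of operations deriving G2 from G1: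
any finite set `S` of operations such that
(i) no two distinct operations of `S` act on the same node or the same edge,
(ii) additions in `S` add elements absent from G1 and removals remove elements present in G1,
(iii) applying `S` to G1 (in the order remEdge / remNode / addNode / addEdge) yields G2, and
(iv) no proper subset of `S` applied to G1 in that order yields G2,
must equal Δ(G1, G2). -/
theorem delta_unique {α : Type*} (G1 G2 : PlainGraph α)
    (h1 : G1.WellFormed) (h2 : G2.WellFormed)
    (S : Set (Op α)) (hfin : S.Finite)
    (hnode : ∀ v : α, ¬ (Op.addNode v ∈ S ∧ Op.remNode v ∈ S))
    (hedge : ∀ e : Sym2 α, ¬ (Op.addEdge e ∈ S ∧ Op.remEdge e ∈ S))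
    (haddN : ∀ v : α, Op.addNode v ∈ S → v ∉ G1.V)
    (hremN : ∀ v : α, Op.remNode v ∈ S → v ∈ G1.V)
    (haddE : ∀ e : Sym2 α, Op.addEdge e ∈ S → e ∉ G1.E)
    (hremE : ∀ e : Sym2 α, Op.remEdge e ∈ S → e ∈ G1.E)
    (happ : applyDelta S G1 = G2)
    (hmin : ∀ S' : Set (Op α), S' ⊂ S → applyDelta S' G1 ≠ G2) :
    S = delta G1 G2 := by
  subst happ
  -- key: no remEdge in S has an endpoint that is remNoded
  have key : ∀ e : Sym2 α, Op.remEdge e ∈ S → ∀ v ∈ e, Op.remNode v ∉ S := by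
    intro e he v hv hvS
    refine hmin (S \ {Op.remEdge e}) (Set.sdiff_singleton_ssubset.mpr he) ?_
    have hV : (applyDelta (S \ {Op.remEdge e}) G1).V = (applyDelta S G1).V := by
      simp [applyDelta]
    have hE : (applyDelta (S \ {Op.remEdge e}) G1).E = (applyDelta S G1).E := by
      ext f
      simp only [applyDelta, Set.mem_union, Set.mem_setOf_eq, Set.mem_diff,
        Set.mem_singleton_iff]
      constructor
      · rintro (⟨hf1, hf2, hf3⟩ | h)
        · by_cases hfe : f = e
          · subst hfe
            exact absurd ⟨hvS, by simp⟩ (hf3 v hv)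
          · refine Or.inl ⟨hf1, fun hS => hf2 ⟨hS, by simpa using hfe⟩,
              fun w hw hwS => hf3 w hw ⟨hwS, by simp⟩⟩
        · exact Or.inr h.1
      · rintro (⟨hf1, hf2, hf3⟩ | h)
        · exact Or.inl ⟨hf1, fun hS => hf2 hS.1, fun w hw hwS => hf3 w hw hwS.1⟩
        · exact Or.inr ⟨h, by simp⟩
    cases h' : applyDelta (S \ {Op.remEdge e}) G1
    cases h'' : applyDelta S G1
    simp_all
  ext op
  rw [mem_delta_iff]
  constructor
  · intro hop
    cases op with
    | addNode v =>
      refine Or.inl ⟨v, Or.inr hop, haddN v hop, rfl⟩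
    | remNode v =>
      refine Or.inr (Or.inl ⟨v, hremN v hop, ?_, rfl⟩)
      rintro (⟨-, hns⟩ | hA)
      · exact hns hop
      · exact hnode v ⟨hA, hop⟩
    | addEdge e =>
      exact Or.inr (Or.inr (Or.inl ⟨e, Or.inr hop, haddE e hop, rfl⟩))
    | remEdge e =>
      refine Or.inr (Or.inr (Or.inr ⟨e, ⟨hremE e hop, ?_⟩, ?_, rfl⟩))
      · rintro (⟨-, hns, -⟩ | hA)
        · exact hns hop
        · exact hedge e ⟨hA, hop⟩
      · intro v hv
        exact Or.inl ⟨h1.2 e (hremE e hop) v hv, key e hop v hv⟩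
  · rintro (⟨v,h1',h2',rfl⟩|⟨v,h1',h2',rfl⟩|⟨e,h1',h2',rfl⟩|⟨e,⟨hE1,hE2⟩,hV2,rfl⟩)
    · rcases h1' with ⟨hv1, -⟩ | hA
      · exact absurd hv1 h2'
      · exact hA
    · by_contra hns
      exact h2' (Or.inl ⟨h1', hns⟩)
    · rcases h1' with ⟨hE1, -, -⟩ | hA
      · exact absurd hE1 h2'
      · exact hA
    · by_contra hns
      apply hE2
      refine Or.inl ⟨hE1, hns, fun v hv hvS => ?_⟩
      rcases hV2 v hv with ⟨-, hns'⟩ | hA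
      · exact hns' hvS
      · exact hnode v ⟨hA, hvS⟩
end

section
/- Partial reconstruction is correct: for every set U of nodes, every graph G, and every finite sequence σ of operations, restricting the graph obtained by applying σ to G to U equals the graph obtained by applying the U-filtered subsequence σ|U to the restriction G|U; that is, (apply σ G)|U = apply (σ|U) (G|U). -/
/-- A graph over a node type `α`: a set of nodes and a set of edges
(unordered pairs of nodes). -/
structure DynGraph (α : Type*) where
  V : Set α
  E : Set (Sym2 α)

/-- The action of a single operation on a graph. -/
def applyOp {α : Type*} (G : DynGraph α) : Op α → DynGraph α
  | Op.addNode v => ⟨G.V ∪ {v}, G.E⟩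
  | Op.remNode v => ⟨G.V \ {v}, {e ∈ G.E | v ∉ e}⟩
  | Op.addEdge e => ⟨G.V, G.E ∪ {e}⟩
  | Op.remEdge e => ⟨G.V, G.E \ {e}⟩

/-- Applying a sequence of operations to a graph, from left to right. -/
def applySeq {α : Type*} (G : DynGraph α) (l : List (Op α)) : DynGraph α :=
  l.foldl applyOp G

/-- The restriction `G|U` of a graph to a set `U` of nodes: the nodes of `G` in `U`,
and the edges of `G` with both endpoints in `U`. -/
def DynGraph.restrict {α : Type*} (G : DynGraph α) (U : Set α) : DynGraph α :=
  ⟨G.V ∩ U, {e ∈ G.E | ∀ v ∈ e, v ∈ U}⟩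

/-- An operation concerns `U` when the node it acts on lies in `U`
(for node operations), resp. both endpoints of its edge lie in `U` (for edge operations). -/
def concerns {α : Type*} (U : Set α) : Op α → Prop
  | Op.addNode v => v ∈ U
  | Op.remNode v => v ∈ U
  | Op.addEdge e => ∀ v ∈ e, v ∈ U
  | Op.remEdge e => ∀ v ∈ e, v ∈ U

open Classical in
/-- The `U`-filtered subsequence `σ|U`: the subsequence of operations concerning `U`. -/
noncomputable def filterSeq {α : Type*} (U : Set α) : List (Op α) → List (Op α)
  | [] => []
  | op :: rest => if concerns U op then op :: filterSeq U rest else filterSeq U rest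

open Classical in
lemma applyOp_restrict {α : Type*} (U : Set α) (G : DynGraph α) (op : Op α) :
    (applyOp G op).restrict U =
      if concerns U op then applyOp (G.restrict U) op else G.restrict U := by
  cases op with
  | addNode v =>
    simp only [concerns]
    by_cases h : v ∈ U
    · rw [@if_pos (v ∈ U) (Classical.propDecidable (concerns U (Op.addNode v))) h]
      simp only [applyOp, DynGraph.restrict]
      congr 1
      ext x; simp only [Set.union_singleton, Set.mem_insert_iff, Set.mem_inter_iff]
      constructor
      · rintro ⟨rfl | hx, hU⟩ <;> tauto
      · rintro (rfl | ⟨hx, hU⟩) <;> tauto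
    · rw [@if_neg (v ∈ U) (Classical.propDecidable (concerns U (Op.addNode v))) h]
      simp only [applyOp, DynGraph.restrict]
      congr 1
      ext x; simp only [Set.union_singleton, Set.mem_insert_iff, Set.mem_inter_iff]
      constructor
      · rintro ⟨rfl | hx, hU⟩ <;> tauto
      · tauto
  | remNode v =>
    simp only [concerns]
    by_cases h : v ∈ U
    · rw [@if_pos (v ∈ U) (Classical.propDecidable (concerns U (Op.remNode v))) h]
      simp only [applyOp, DynGraph.restrict]
      congr 1
      · ext x
        simp only [Set.mem_diff, Set.mem_inter_iff, Set.mem_singleton_iff]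
        tauto
      · ext e
        simp only [Set.mem_setOf_eq]
        tauto
    · rw [@if_neg (v ∈ U) (Classical.propDecidable (concerns U (Op.remNode v))) h]
      simp only [applyOp, DynGraph.restrict]
      congr 1
      · ext x
        simp only [Set.mem_diff, Set.mem_inter_iff, Set.mem_singleton_iff]
        constructor
        · tauto
        · rintro ⟨hx, hU⟩; exact ⟨⟨hx, fun hv => h (hv ▸ hU)⟩, hU⟩
      · ext e
        simp only [Set.mem_setOf_eq]
        constructor
        · tauto
        · rintro ⟨he, hU⟩; exact ⟨⟨he, fun hv => h (hU v hv)⟩, hU⟩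
  | addEdge e =>
    simp only [concerns]
    by_cases h : ∀ v ∈ e, v ∈ U
    · rw [@if_pos (∀ v ∈ e, v ∈ U) (Classical.propDecidable (concerns U (Op.addEdge e))) h]
      simp only [applyOp, DynGraph.restrict]
      congr 1
      ext x
      simp only [Set.union_singleton, Set.mem_insert_iff, Set.mem_setOf_eq]
      constructor
      · rintro ⟨rfl | hx, hU⟩ <;> tauto
      · rintro (rfl | ⟨hx, hU⟩) <;> tauto
    · rw [@if_neg (∀ v ∈ e, v ∈ U) (Classical.propDecidable (concerns U (Op.addEdge e))) h]
      simp only [applyOp, DynGraph.restrict]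
      congr 1
      ext x
      simp only [Set.union_singleton, Set.mem_insert_iff, Set.mem_setOf_eq]
      constructor
      · rintro ⟨rfl | hx, hU⟩ <;> tauto
      · tauto
  | remEdge e =>
    simp only [concerns]
    by_cases h : ∀ v ∈ e, v ∈ U
    · rw [@if_pos (∀ v ∈ e, v ∈ U) (Classical.propDecidable (concerns U (Op.remEdge e))) h]
      simp only [applyOp, DynGraph.restrict]
      congr 1
      ext x
      simp only [Set.mem_diff, Set.mem_setOf_eq, Set.mem_singleton_iff]
      tauto
    · rw [@if_neg (∀ v ∈ e, v ∈ U) (Classical.propDecidable (concerns U (Op.remEdge e))) h]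
      simp only [applyOp, DynGraph.restrict]
      congr 1
      ext x
      simp only [Set.mem_diff, Set.mem_setOf_eq, Set.mem_singleton_iff]
      constructor
      · tauto
      · rintro ⟨hx, hU⟩; exact ⟨⟨hx, fun hv => h (hv ▸ hU)⟩, hU⟩

/-- Partial reconstruction is correct: `(apply σ G)|U = apply (σ|U) (G|U)`. -/
theorem partial_reconstruction {α : Type*} (U : Set α) (G : DynGraph α)
    (σ : List (Op α)) :
    (applySeq G σ).restrict U = applySeq (G.restrict U) (filterSeq U σ) := by
  induction σ generalizing G with
  | nil => rfl
  | cons op rest ih =>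
    rw [applySeq, List.foldl_cons, ← applySeq, ih, filterSeq, applyOp_restrict]
    split <;> simp [applySeq]
end
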